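/- If a ∈ ℤ, b is a positive even integer, and 2 + a(b-1) < 0, then r_{a,b}(X) = 1 + aX + ... + aX^{b-1} + X^b is a reciprocal Salem polynomial: it is monic, reciprocal, and has exactly one root of modulus > 1, this root being simple and real, with all other roots on the unit circle except one root inside. -/

import Mathlib

open Polynomial

/-- `r_{a,b}(X) = 1 + aX + ⋯ + aX^{b-1} + X^b` over `ℤ`. -/
noncomputable def rPoly (a : ℤ) (b : ℕ) : Polynomial ℤ :=
  1 + X ^ b + C a * ∑ i ∈ Finset.Ico 1 b, X ^ i

open Complex Finset

lemma rPoly_coeff (a : ℤ) (b : ℕ) (hb : 2 ≤ b) (n : ℕ) :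
    (rPoly a b).coeff n = if n = 0 ∨ n = b then 1 else if n < b then a else 0 := by
  have hsum : (∑ i ∈ Finset.Ico 1 b, (X : ℤ[X]) ^ i).coeff n
      = if n ∈ Finset.Ico 1 b then 1 else 0 := by
    rw [Polynomial.finset_sum_coeff]
    simp only [Polynomial.coeff_X_pow]
    rw [Finset.sum_ite_eq (Finset.Ico 1 b) n (fun _ => (1:ℤ))]
  simp only [rPoly, Polynomial.coeff_add, Polynomial.coeff_mul_C, Polynomial.coeff_C_mul,
    Polynomial.coeff_one, Polynomial.coeff_X_pow, hsum, Finset.mem_Ico]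
  rcases Nat.eq_zero_or_pos n with h0 | h0
  · subst h0; simp; omega
  rcases eq_or_ne n b with hnb | hnb
  · subst hnb; simp; omega
  rcases lt_or_ge n b with hlt | hle
  · have h1 : 1 ≤ n := h0
    simp [h0.ne', hnb, hlt, h1, show ¬ (n = 0 ∨ n = b) by omega]
  · simp [h0.ne', hnb, show ¬ n < b by omega, show ¬(1 ≤ n ∧ n < b) by omega,
      show ¬ (n = 0 ∨ n = b) by omega]

lemma rPoly_natDegree (a : ℤ) (b : ℕ) (hb : 2 ≤ b) : (rPoly a b).natDegree = b := by
  have hle : (rPoly a b).natDegree ≤ b := by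
    apply le_trans (Polynomial.natDegree_add_le _ _)
    simp only [max_le_iff]
    constructor
    · apply le_trans (Polynomial.natDegree_add_le _ _)
      simp [Polynomial.natDegree_X_pow]
    · apply le_trans (Polynomial.natDegree_C_mul_le _ _)
      apply le_trans (Polynomial.natDegree_sum_le _ _)
      simp only [Finset.fold_max_le]
      refine ⟨Nat.zero_le _, fun i hi => ?_⟩
      simp only [Function.comp, Polynomial.natDegree_X_pow]
      exact le_of_lt (Finset.mem_Ico.mp hi).2
  have hcoeff : (rPoly a b).coeff b = 1 := by
    rw [rPoly_coeff a b hb]; simp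
  have : b ≤ (rPoly a b).natDegree :=
    Polynomial.le_natDegree_of_ne_zero (by rw [hcoeff]; exact one_ne_zero)
  omega

lemma rPoly_monic (a : ℤ) (b : ℕ) (hb : 2 ≤ b) : (rPoly a b).Monic := by
  unfold Polynomial.Monic Polynomial.leadingCoeff
  rw [rPoly_natDegree a b hb, rPoly_coeff a b hb]; simp

lemma rPoly_recip (a : ℤ) (b : ℕ) (hb : 2 ≤ b) (i : ℕ) (hi : i ≤ b) :
    (rPoly a b).coeff i = (rPoly a b).coeff (b - i) := by
  rw [rPoly_coeff a b hb, rPoly_coeff a b hb]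
  rcases Nat.eq_zero_or_pos i with h0 | h0
  · subst h0; simp
  rcases eq_or_ne i b with hib | hib
  · subst hib; simp
  · have : ¬(b - i = 0 ∨ b - i = b) := by omega
    simp [show ¬(i = 0 ∨ i = b) by omega, this, show i < b by omega, show b - i < b by omega]

lemma rC_eval (a : ℤ) (b : ℕ) (z : ℂ) :
    ((rPoly a b).map (Int.castRingHom ℂ)).eval z
      = 1 + z ^ b + (a : ℂ) * ∑ i ∈ Finset.Ico 1 b, z ^ i := by
  simp [rPoly, Polynomial.eval_finset_sum, Polynomial.map_sum]

-- real version

noncomputable def G (a : ℤ) (b : ℕ) : ℝ → ℝ :=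
  fun x => 1 + x ^ b + (a : ℝ) * ∑ i ∈ Finset.Ico 1 b, x ^ i

lemma rC_eval_real (a : ℤ) (b : ℕ) (x : ℝ) :
    ((rPoly a b).map (Int.castRingHom ℂ)).eval (x : ℂ) = (G a b x : ℂ) := by
  rw [rC_eval]; unfold G; push_cast; ring

lemma G_cont (a : ℤ) (b : ℕ) : Continuous (G a b) := by
  unfold G; fun_prop

lemma exists_lam (a : ℤ) (b : ℕ) (hb : 2 ≤ b) (ha : 2 + a * (b - 1 : ℤ) < 0) :
    ∃ t : ℝ, 1 < t ∧ G a b t = 0 := by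
  have hG1 : G a b 1 < 0 := by
    have : G a b 1 = ((2 + a * (b - 1 : ℤ) : ℤ) : ℝ) := by
      unfold G; push_cast; simp [Nat.card_Ico]
      push_cast [Nat.cast_sub (by omega : 1 ≤ b)]; ring
    rw [this]
    exact_mod_cast ha
  set x0 : ℝ := |(a:ℝ)| * b + 2 with hx0
  have hx1' : (1:ℝ) < x0 := by
    rw [hx0]; nlinarith [abs_nonneg (a:ℝ), Nat.cast_nonneg (α := ℝ) b, mul_nonneg (abs_nonneg (a:ℝ)) (Nat.cast_nonneg (α := ℝ) b)]
  have hx1 : (1:ℝ) ≤ x0 := le_of_lt hx1'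
  have hGx0 : 0 < G a b x0 := by
    have hsumle : ∑ i ∈ Finset.Ico 1 b, x0 ^ i ≤ (b-1 : ℕ) * x0 ^ (b-1) := by
      calc ∑ i ∈ Finset.Ico 1 b, x0 ^ i ≤ ∑ i ∈ Finset.Ico 1 b, x0 ^ (b-1) := by
            apply Finset.sum_le_sum
            intro i hi
            exact pow_le_pow_right₀ hx1 (by have := (Finset.mem_Ico.mp hi).2; omega)
        _ = (b-1 : ℕ) * x0 ^ (b-1) := by rw [Finset.sum_const, Nat.card_Ico]; simp
    have habs : (a:ℝ) * ∑ i ∈ Finset.Ico 1 b, x0 ^ i ≥ -(|(a:ℝ)| * ((b-1:ℕ) * x0 ^ (b-1))) := by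
      have h1 : |(a:ℝ) * ∑ i ∈ Finset.Ico 1 b, x0 ^ i| ≤ |(a:ℝ)| * ((b-1:ℕ) * x0 ^ (b-1)) := by
        rw [abs_mul]
        apply mul_le_mul_of_nonneg_left _ (abs_nonneg _)
        rw [_root_.abs_of_nonneg (Finset.sum_nonneg fun i _ => by positivity)]
        exact hsumle
      linarith [neg_abs_le ((a:ℝ) * ∑ i ∈ Finset.Ico 1 b, x0 ^ i)]
    have hpow : x0 ^ b = x0 * x0 ^ (b-1) := by
      rw [← pow_succ']; congr 1; omega
    have hab : |(a:ℝ)| * (b-1:ℕ) < x0 := by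
      calc |(a:ℝ)| * (b-1:ℕ) ≤ |(a:ℝ)| * b := by
              apply mul_le_mul_of_nonneg_left _ (abs_nonneg _)
              exact_mod_cast Nat.cast_le.mpr (Nat.sub_le b 1)
        _ < x0 := by rw [hx0]; linarith
    have hlarge : |(a:ℝ)| * ((b-1:ℕ) * x0 ^ (b-1)) < x0 * x0 ^ (b-1) := by
      rw [← mul_assoc]
      exact mul_lt_mul_of_pos_right hab (by positivity)
    unfold G
    rw [hpow]
    nlinarith [habs]
  obtain ⟨t, ht, hGt⟩ := intermediate_value_Ioo (le_of_lt hx1') (G_cont a b).continuousOn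
    (Set.mem_Ioo.mpr ⟨hG1, hGx0⟩)
  exact ⟨t, ht.1, hGt⟩

noncomputable def F (a : ℤ) (m : ℕ) : ℝ → ℝ :=
  fun θ => 2 * Real.cos (m * θ) + (a:ℝ) * ∑ i ∈ Finset.Ico 1 (2*m), Real.cos (((i:ℝ) - m) * θ)

lemma F_cont (a : ℤ) (m : ℕ) : Continuous (F a m) := by
  unfold F; fun_prop

lemma keyC (A : ℂ) (m : ℕ) (t : ℂ) :
    1 + Complex.exp (t * I) ^ (2*m) + A * ∑ i ∈ Finset.Ico 1 (2*m), Complex.exp (t * I) ^ i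
      = Complex.exp ((m:ℂ) * t * I) *
        (2 * Complex.cos ((m:ℂ) * t)
          + A * ∑ i ∈ Finset.Ico 1 (2*m), Complex.cos (((i:ℂ) - m) * t)) := by
  set e : ℂ → ℂ := fun x => Complex.exp (x * t * I) with he
  have hmul : ∀ x y : ℂ, e x * e y = e (x + y) := by
    intro x y; simp only [he, ← Complex.exp_add]; ring_nf
  have hepow : ∀ i : ℕ, Complex.exp (t * I) ^ i = e (i : ℂ) := by
    intro i
    simp only [he, ← Complex.exp_nat_mul]; ring_nf
  have hcos : ∀ x : ℂ, 2 * Complex.cos (x * t) = e x + e (-x) := by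
    intro x; rw [Complex.two_cos]; simp only [he]; ring_nf
  have hterm : ∀ x : ℂ, e (m:ℂ) * (2 * Complex.cos (x * t)) = e ((m:ℂ) + x) + e ((m:ℂ) - x) := by
    intro x
    rw [hcos, mul_add, hmul, hmul]
    ring_nf
  have h1 : e (m:ℂ) * (2 * Complex.cos ((m:ℂ) * t)) = e ((2*m : ℕ):ℂ) + 1 := by
    rw [hterm (m:ℂ)]
    have : e 0 = 1 := by simp [he]
    push_cast
    rw [show (m:ℂ) - m = 0 by ring, this, show (m:ℂ) + m = 2*(m:ℂ) by ring]
  have hterm2 : ∀ i ∈ Finset.Ico 1 (2*m),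
      e (m:ℂ) * (2 * Complex.cos (((i:ℂ) - m) * t)) = e (i:ℂ) + e (((2*m - i : ℕ) : ℂ)) := by
    intro i hi
    rw [hterm]
    have h2 := (Finset.mem_Ico.mp hi).2
    rw [show (m:ℂ) + ((i:ℂ) - m) = (i:ℂ) by ring]
    congr 1
    push_cast [Nat.cast_sub (le_of_lt h2)]
    ring
  have hsum2 : ∑ i ∈ Finset.Ico 1 (2*m), e (((2*m - i : ℕ)):ℂ)
      = ∑ i ∈ Finset.Ico 1 (2*m), e (i:ℂ) := by
    apply Finset.sum_bij' (i := fun i (_ : i ∈ Finset.Ico 1 (2*m)) => 2*m - i)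
      (j := fun i (_ : i ∈ Finset.Ico 1 (2*m)) => 2*m - i)
    · intro i hi; simp only [Finset.mem_Ico] at *; omega
    · intro i hi; simp only [Finset.mem_Ico] at *; omega
    · intro i hi; simp only [Finset.mem_Ico] at hi; omega
    · intro i hi; simp only [Finset.mem_Ico] at hi; omega
    · intro a _; rfl
  have hsumid : e (m:ℂ) * (2 * ∑ i ∈ Finset.Ico 1 (2*m), Complex.cos (((i:ℂ) - m) * t))
      = 2 * ∑ i ∈ Finset.Ico 1 (2*m), e (i:ℂ) := by
    calc e (m:ℂ) * (2 * ∑ i ∈ Finset.Ico 1 (2*m), Complex.cos (((i:ℂ) - m) * t))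
        = ∑ i ∈ Finset.Ico 1 (2*m), e (m:ℂ) * (2 * Complex.cos (((i:ℂ) - m) * t)) := by
          rw [Finset.mul_sum, Finset.mul_sum]
      _ = ∑ i ∈ Finset.Ico 1 (2*m), (e (i:ℂ) + e (((2*m - i : ℕ)):ℂ)) :=
          Finset.sum_congr rfl hterm2
      _ = 2 * ∑ i ∈ Finset.Ico 1 (2*m), e (i:ℂ) := by
          rw [Finset.sum_add_distrib, hsum2]; ring
  simp only [hepow]
  have expand : e (m:ℂ) * (2 * Complex.cos ((m:ℂ) * t)
      + A * ∑ i ∈ Finset.Ico 1 (2*m), Complex.cos (((i:ℂ) - m) * t))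
      = e (m:ℂ) * (2 * Complex.cos ((m:ℂ) * t))
        + A/2 * (e (m:ℂ) * (2 * ∑ i ∈ Finset.Ico 1 (2*m), Complex.cos (((i:ℂ) - m) * t))) := by
    ring
  rw [expand, h1, hsumid]
  ring

lemma key (a : ℤ) (m : ℕ) (θ : ℝ) :
    ((rPoly a (2*m)).map (Int.castRingHom ℂ)).eval (Complex.exp (θ * I))
      = Complex.exp ((m:ℝ) * θ * I) * ((F a m θ : ℝ) : ℂ) := by
  rw [rC_eval]
  have := keyC (a:ℂ) m (θ:ℂ)
  unfold F
  push_cast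
  convert this using 3

open Real in
lemma Fval (a : ℤ) (m : ℕ) (hm : 1 ≤ m) (k : ℕ) (hk1 : 1 ≤ k) (hk2 : k < 2*m) :
    F a m (π * k / m) = (-1)^k * (2 - a) := by
  set θ : ℝ := π * k / m with hθ
  have hmR : (m:ℝ) ≠ 0 := by positivity
  have hmC : ((m:ℕ):ℂ) ≠ 0 := by exact_mod_cast hmR
  have hmθ : (m:ℝ) * θ = π * k := by rw [hθ, mul_div_assoc']; exact mul_div_cancel_left₀ _ hmR
  have hz : Complex.exp ((m:ℝ) * θ * I) = (-1)^k := by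
    rw [show (((m:ℝ)):ℂ) * (θ:ℂ) * I = ((((m:ℝ) * θ : ℝ)):ℂ) * I by push_cast; ring, hmθ]
    push_cast
    rw [show (π:ℂ) * k * I = (k:ℕ) * (π * I) by push_cast; ring, Complex.exp_nat_mul,
      Complex.exp_pi_mul_I]
  set z : ℂ := Complex.exp (θ * I) with hzdef
  have hzb : z ^ (2*m) = 1 := by
    rw [hzdef, ← Complex.exp_nat_mul]
    rw [show ((2*m : ℕ):ℂ) * ((θ:ℝ) * I) = (k:ℕ) * (2 * π * I) by
      push_cast; linear_combination (2 * I) * (by exact_mod_cast hmθ : (m:ℂ) * (θ:ℂ) = (π:ℂ) * (k:ℂ))]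
    exact Complex.exp_nat_mul_two_pi_mul_I k
  have hz1 : z ≠ 1 := by
    rw [hzdef, Ne, Complex.exp_eq_one_iff]
    rintro ⟨n, hn⟩
    have hI : ((θ:ℝ) : ℂ) = (n:ℤ) * (2 * π) := by
      have := hn
      rw [show ((n:ℤ):ℂ) * (2 * ↑π * I) = (((n:ℤ) * (2*π) : ℝ) : ℂ) * I by push_cast; ring] at this
      exact_mod_cast mul_right_cancel₀ Complex.I_ne_zero this
    have hIR : θ = (n:ℤ) * (2 * π) := by exact_mod_cast hI
    have hpos : 0 < θ := by
      rw [hθ]; positivity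
    have hlt : θ < 2 * π := by
      rw [hθ, div_lt_iff₀ (by positivity : (0:ℝ) < m)]
      calc π * k < π * (2*m) := by
            apply mul_lt_mul_of_pos_left _ Real.pi_pos
            exact_mod_cast hk2
        _ = 2 * π * m := by ring
    rcases lt_trichotomy n 0 with h | h | h
    · have : (n:ℝ) ≤ -1 := by exact_mod_cast Int.le_sub_one_of_lt h
      nlinarith [Real.pi_pos]
    · subst h
      simp only [Int.cast_zero, zero_mul] at hIR
      linarith
    · have : (1:ℝ) ≤ (n:ℝ) := by exact_mod_cast h
      nlinarith [Real.pi_pos]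
  have hsum : ∑ i ∈ Finset.Ico 1 (2*m), z ^ i = -1 := by
    have hgeom : ∑ i ∈ Finset.range (2*m), z ^ i = 0 := by
      rw [geom_sum_eq hz1, hzb]; simp
    have hsplit : ∑ i ∈ Finset.range (2*m), z ^ i
        = z ^ 0 + ∑ i ∈ Finset.Ico 1 (2*m), z ^ i := by
      rw [Finset.range_eq_Ico]
      exact Finset.sum_eq_sum_Ico_succ_bot (by omega) _
    rw [hsplit] at hgeom
    simp at hgeom
    linear_combination hgeom
  have heval := key a m θ
  rw [rC_eval, ← hzdef, hzb, hsum, hz] at heval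
  have : ((F a m θ : ℝ) : ℂ) = (-1)^k * (2 - a) := by
    rcases Nat.even_or_odd k with he | ho
    · rw [he.neg_one_pow] at heval ⊢; linear_combination -heval
    · rw [ho.neg_one_pow] at heval ⊢; linear_combination heval
  exact_mod_cast this

lemma recip_root (a : ℤ) (b : ℕ) (z : ℂ) (hz : z ≠ 0)
    (h : ((rPoly a b).map (Int.castRingHom ℂ)).IsRoot z) :
    ((rPoly a b).map (Int.castRingHom ℂ)).IsRoot z⁻¹ := by
  have hterm : ∀ i ∈ Finset.Ico 1 b, z ^ b * (z⁻¹) ^ i = z ^ (b - i) := by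
    intro i hi
    have hib := (Finset.mem_Ico.mp hi).2
    rw [inv_pow, pow_sub₀ z hz (le_of_lt hib)]
  have hre : ∑ i ∈ Finset.Ico 1 b, z ^ (b - i) = ∑ i ∈ Finset.Ico 1 b, z ^ i := by
    apply Finset.sum_bij' (i := fun i (_ : i ∈ Finset.Ico 1 b) => b - i)
      (j := fun i (_ : i ∈ Finset.Ico 1 b) => b - i)
    · intro i hi; simp only [Finset.mem_Ico] at *; omega
    · intro i hi; simp only [Finset.mem_Ico] at *; omega
    · intro i hi; simp only [Finset.mem_Ico] at hi; omega
    · intro i hi; simp only [Finset.mem_Ico] at hi; omega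
    · intro i _; rfl
  have hkey : z ^ b * ((rPoly a b).map (Int.castRingHom ℂ)).eval z⁻¹
      = ((rPoly a b).map (Int.castRingHom ℂ)).eval z := by
    rw [rC_eval, rC_eval]
    have hsum : z ^ b * ((a:ℂ) * ∑ i ∈ Finset.Ico 1 b, (z⁻¹) ^ i)
        = (a:ℂ) * ∑ i ∈ Finset.Ico 1 b, z ^ i := by
      rw [mul_left_comm, Finset.mul_sum, Finset.sum_congr rfl hterm, hre]
    rw [mul_add, mul_add, hsum, inv_pow, mul_inv_cancel₀ (pow_ne_zero b hz), mul_one]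
    ring
  unfold Polynomial.IsRoot at *
  rw [h] at hkey
  rcases mul_eq_zero.mp hkey with h1 | h2
  · exact absurd h1 (pow_ne_zero b hz)
  · exact h2

open Real in
lemma exists_xi (a : ℤ) (m : ℕ) (hm : 1 ≤ m) (hA : 0 < 2 - (a:ℝ)) (k : ℕ)
    (hk1 : 1 ≤ k) (hk2 : k + 1 < 2*m) :
    ∃ ξ, ξ ∈ Set.Ioo (π*(k:ℝ)/m) (π*((k:ℝ)+1)/m) ∧ F a m ξ = 0 := by
  have hmpos : (0:ℝ) < m := by positivity
  have hmono : π*(k:ℝ)/m ≤ π*((k:ℝ)+1)/m := by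
    rw [div_le_div_iff₀ hmpos hmpos]
    nlinarith [Real.pi_pos]
  have h1 := Fval a m hm k hk1 (by omega)
  have h2 := Fval a m hm (k+1) (by omega) hk2
  rw [show (((k+1:ℕ)):ℝ) = (k:ℝ)+1 by push_cast; ring] at h2
  rcases Nat.even_or_odd k with he | ho
  · have e1 : F a m (π*(k:ℝ)/m) = (2 - a) := by rw [h1, he.neg_one_pow, one_mul]
    have e2 : F a m (π*((k:ℝ)+1)/m) = -(2 - a) := by
      rw [h2, (he.add_one).neg_one_pow]; ring
    have h0 : (0:ℝ) ∈ Set.Ioo (F a m (π*((k:ℝ)+1)/m)) (F a m (π*(k:ℝ)/m)) := by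
      rw [e1, e2]; exact Set.mem_Ioo.mpr ⟨by linarith, by linarith⟩
    obtain ⟨ξ, hmem, hval⟩ := intermediate_value_Ioo' hmono (F_cont a m).continuousOn h0
    exact ⟨ξ, hmem, hval⟩
  · have e1 : F a m (π*(k:ℝ)/m) = -(2 - a) := by rw [h1, ho.neg_one_pow]; ring
    have e2 : F a m (π*((k:ℝ)+1)/m) = (2 - a) := by
      rw [h2, (ho.add_one).neg_one_pow, one_mul]
    have h0 : (0:ℝ) ∈ Set.Ioo (F a m (π*(k:ℝ)/m)) (F a m (π*((k:ℝ)+1)/m)) := by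
      rw [e1, e2]; exact Set.mem_Ioo.mpr ⟨by linarith, by linarith⟩
    obtain ⟨ξ, hmem, hval⟩ := intermediate_value_Ioo hmono (F_cont a m).continuousOn h0
    exact ⟨ξ, hmem, hval⟩

lemma exp_inj_circle {x y : ℝ} (hx : 0 < x) (hx2 : x < 2*Real.pi) (hy : 0 < y)
    (hy2 : y < 2*Real.pi) (h : Complex.exp (x * I) = Complex.exp (y * I)) : x = y := by
  rw [Complex.exp_eq_exp_iff_exists_int] at h
  obtain ⟨n, hn⟩ := h
  have : ((x : ℂ)) = ((y + n * (2*Real.pi) : ℝ) : ℂ) := by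
    push_cast at hn ⊢
    have := mul_right_cancel₀ Complex.I_ne_zero
      (by rw [hn]; push_cast; ring : (x:ℂ) * I = (y + n * (2*Real.pi)) * I)
    exact this
  have hr : x = y + n * (2*Real.pi) := by exact_mod_cast this
  have hpi := Real.pi_pos
  rcases lt_trichotomy n 0 with h | h | h
  · have : (n:ℝ) ≤ -1 := by exact_mod_cast Int.le_sub_one_of_lt h
    nlinarith
  · subst h; simpa using hr
  · have : (1:ℝ) ≤ (n:ℝ) := by exact_mod_cast h
    nlinarith

theorem stmt_8 (a : ℤ) (b : ℕ) (hbpos : 0 < b) (hbeven : Even b)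
    (ha : 2 + a * (b - 1 : ℤ) < 0) :
    (rPoly a b).Monic ∧
    (∀ i ≤ (rPoly a b).natDegree,
      (rPoly a b).coeff i = (rPoly a b).coeff ((rPoly a b).natDegree - i)) ∧
    ∃ lam : ℂ,
      1 < ‖lam‖ ∧
      ((rPoly a b).map (Int.castRingHom ℂ)).IsRoot lam ∧
      ((rPoly a b).map (Int.castRingHom ℂ)).rootMultiplicity lam = 1 ∧
      lam.im = 0 ∧
      ∃ mu : ℂ,
        ‖mu‖ < 1 ∧
        ((rPoly a b).map (Int.castRingHom ℂ)).IsRoot mu ∧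
        ∀ z : ℂ, ((rPoly a b).map (Int.castRingHom ℂ)).IsRoot z →
          z = lam ∨ z = mu ∨ ‖z‖ = 1 := by
  obtain ⟨m, hm2⟩ := hbeven
  have hbm : b = 2 * m := by omega
  have hm : 1 ≤ m := by omega
  have hb2 : 2 ≤ b := by omega
  -- a is negative
  have haneg : a < 0 := by nlinarith [ha, (by omega : (1:ℤ) ≤ (b:ℤ) - 1)]
  have hA : 0 < 2 - (a:ℝ) := by
    have : (a:ℝ) < 0 := by exact_mod_cast haneg
    linarith
  set P := (rPoly a b).map (Int.castRingHom ℂ) with hP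
  have hPmonic : P.Monic := (rPoly_monic a b hb2).map _
  have hPdeg : P.natDegree = b := by
    rw [hP, (rPoly_monic a b hb2).natDegree_map, rPoly_natDegree a b hb2]
  have hPne : P ≠ 0 := hPmonic.ne_zero
  -- lam
  obtain ⟨t, ht1, htroot'⟩ := exists_lam a b hb2 ha
  have htroot : (1 : ℝ) + t ^ b + (a : ℝ) * ∑ i ∈ Finset.Ico 1 b, t ^ i = 0 := htroot'
  have ht0 : (0:ℝ) < t := by linarith
  set lam : ℂ := ((t : ℝ) : ℂ) with hlam
  have hlamroot : P.IsRoot lam := by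
    rw [hP, Polynomial.IsRoot, rC_eval]
    rw [show ((1:ℂ) + lam ^ b + (a:ℂ) * ∑ i ∈ Finset.Ico 1 b, lam ^ i)
      = (((1:ℝ) + t ^ b + (a:ℝ) * ∑ i ∈ Finset.Ico 1 b, t ^ i : ℝ) : ℂ) by push_cast; ring]
    rw [htroot]; simp
  have hlamabs : ‖lam‖ = t := by
    rw [hlam, Complex.norm_of_nonneg ht0.le]
  have hlamne : lam ≠ 0 := by
    rw [hlam]; exact_mod_cast ne_of_gt ht0
  -- mu
  set mu : ℂ := lam⁻¹ with hmu
  have hmuroot : P.IsRoot mu := recip_root a b lam hlamne hlamroot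
  have hmuabs : ‖mu‖ = t⁻¹ := by
    rw [hmu, norm_inv, hlamabs]
  have hmult1 : ‖mu‖ < 1 := by
    rw [hmuabs]; exact inv_lt_one_of_one_lt₀ ht1
  have hlamgt : 1 < ‖lam‖ := by rw [hlamabs]; exact ht1
  -- circle roots
  have hex : ∀ k : ℕ, ∃ ξ : ℝ, 1 ≤ k → k + 1 < 2*m →
      (ξ ∈ Set.Ioo (Real.pi*(k:ℝ)/m) (Real.pi*((k:ℝ)+1)/m) ∧ F a m ξ = 0) := by
    intro k
    by_cases hc : 1 ≤ k ∧ k + 1 < 2*m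
    · obtain ⟨ξ, h1, h2⟩ := exists_xi a m hm hA k hc.1 hc.2
      exact ⟨ξ, fun _ _ => ⟨h1, h2⟩⟩
    · exact ⟨0, fun h1 h2 => absurd ⟨h1, h2⟩ hc⟩
  choose ξ hξ using hex
  have hmpos : (0:ℝ) < m := by positivity
  have hpi := Real.pi_pos
  -- basic bounds on ξ k for k in range
  have hξbound : ∀ k, 1 ≤ k → k + 1 < 2*m → 0 < ξ k ∧ ξ k < 2*Real.pi := by
    intro k h1 h2
    obtain ⟨⟨hl, hr⟩, _⟩ := hξ k h1 h2
    constructor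
    · have : 0 < Real.pi*(k:ℝ)/m := by
        apply div_pos _ hmpos
        have : (0:ℝ) < (k:ℝ) := by exact_mod_cast h1
        positivity
      linarith
    · have : Real.pi*((k:ℝ)+1)/m ≤ 2*Real.pi := by
        rw [div_le_iff₀ hmpos]
        have : (k:ℝ) + 1 ≤ 2*m := by exact_mod_cast (by omega : k+1 ≤ 2*m)
        nlinarith
      linarith
  -- ξ is strictly monotone on the index range
  have hξmono : ∀ k k', 1 ≤ k → k + 1 < 2*m → 1 ≤ k' → k' + 1 < 2*m → k < k' → ξ k < ξ k' := by
    intro k k' h1 h2 h1' h2' hkk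
    obtain ⟨⟨_, hr⟩, _⟩ := hξ k h1 h2
    obtain ⟨⟨hl', _⟩, _⟩ := hξ k' h1' h2'
    have : Real.pi*((k:ℝ)+1)/m ≤ Real.pi*((k':ℝ))/m := by
      rw [div_le_div_iff₀ hmpos hmpos]
      have hkr : (k:ℝ) + 1 ≤ (k':ℝ) := by exact_mod_cast hkk
      nlinarith [mul_nonneg (mul_pos hpi hmpos).le (sub_nonneg.mpr hkr)]
    linarith
  -- the finset of roots
  set T1 : Finset ℂ := (Finset.Ico 1 (2*m-1)).image (fun k => Complex.exp (ξ k * I)) with hT1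
  have hmemrange : ∀ k ∈ Finset.Ico 1 (2*m-1), 1 ≤ k ∧ k + 1 < 2*m := by
    intro k hk; simp only [Finset.mem_Ico] at hk; omega
  have hT1root : ∀ w ∈ T1, P.IsRoot w ∧ ‖w‖ = 1 := by
    intro w hw
    rw [hT1, Finset.mem_image] at hw
    obtain ⟨k, hk, rfl⟩ := hw
    obtain ⟨h1, h2⟩ := hmemrange k hk
    obtain ⟨_, hF0⟩ := hξ k h1 h2
    constructor
    · rw [hP, hbm, Polynomial.IsRoot, key, hF0]
      simp
    · rw [Complex.norm_exp]
      simp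
  have hinj : Set.InjOn (fun k => Complex.exp (ξ k * I)) (Finset.Ico 1 (2*m-1)) := by
    intro k hk k' hk' heq
    obtain ⟨h1, h2⟩ := hmemrange k hk
    obtain ⟨h1', h2'⟩ := hmemrange k' hk'
    by_contra hne
    rcases lt_or_gt_of_ne hne with hlt | hgt
    · have := hξmono k k' h1 h2 h1' h2' hlt
      obtain ⟨hb1, hb2⟩ := hξbound k h1 h2
      obtain ⟨hb1', hb2'⟩ := hξbound k' h1' h2'
      have := exp_inj_circle hb1 hb2 hb1' hb2' heq
      linarith
    · have := hξmono k' k h1' h2' h1 h2 hgt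
      obtain ⟨hb1, hb2⟩ := hξbound k h1 h2
      obtain ⟨hb1', hb2'⟩ := hξbound k' h1' h2'
      have := exp_inj_circle hb1 hb2 hb1' hb2' heq
      linarith
  have hT1card : T1.card = 2*m - 2 := by
    rw [hT1, Finset.card_image_of_injOn hinj, Nat.card_Ico]
    omega
  -- T1 elements have modulus 1, so lam and mu are not in T1
  have hlamnotT1 : lam ∉ T1 := by
    intro h
    have := (hT1root lam h).2
    rw [hlamabs] at this; linarith
  have hmunotT1 : mu ∉ T1 := by
    intro h
    have := (hT1root mu h).2
    rw [hmuabs] at this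
    have : t = 1 := by
      field_simp at this; linarith [this]
    linarith
  have hlamnemu : lam ≠ mu := by
    intro h
    rw [← h] at hmult1
    linarith
  set T : Finset ℂ := insert lam (insert mu T1) with hT
  have hTcard : T.card = 2*m := by
    rw [hT, Finset.card_insert_of_notMem, Finset.card_insert_of_notMem hmunotT1, hT1card]
    · omega
    · simp only [Finset.mem_insert]
      push_neg
      exact ⟨hlamnemu, hlamnotT1⟩
  have hTroot : ∀ w ∈ T, P.IsRoot w := by
    intro w hw
    rw [hT] at hw
    simp only [Finset.mem_insert] at hw
    rcases hw with rfl | rfl | hw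
    · exact hlamroot
    · exact hmuroot
    · exact (hT1root w hw).1
  -- root counting
  have hcard : P.roots.card = b := by
    rw [← hPdeg]
    exact (Polynomial.splits_iff_card_roots.mp (IsAlgClosed.splits P))
  have hTsub : T ⊆ P.roots.toFinset := by
    intro w hw
    rw [Multiset.mem_toFinset, Polynomial.mem_roots hPne]
    exact hTroot w hw
  have hsumle : ∑ w ∈ T, P.roots.count w ≤ b := by
    calc ∑ w ∈ T, P.roots.count w ≤ ∑ w ∈ P.roots.toFinset, P.roots.count w :=
        Finset.sum_le_sum_of_subset hTsub
      _ = P.roots.card := P.roots.toFinset_sum_count_eq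
      _ = b := hcard
  have hcount1 : ∀ w ∈ T, 1 ≤ P.roots.count w := by
    intro w hw
    rw [Nat.one_le_iff_ne_zero, Ne, Multiset.count_eq_zero]
    intro hnot
    exact hnot (Multiset.mem_toFinset.mp (hTsub hw))
  have hsumge : (2*m : ℕ) ≤ ∑ w ∈ T, P.roots.count w := by
    calc (2*m : ℕ) = T.card := hTcard.symm
      _ = ∑ w ∈ T, 1 := by rw [Finset.card_eq_sum_ones]
      _ ≤ ∑ w ∈ T, P.roots.count w := Finset.sum_le_sum hcount1
  have hsumeq : ∑ w ∈ T, P.roots.count w = 2*m := by omega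
  have hcounteq : ∀ w ∈ T, P.roots.count w = 1 := by
    intro w hw
    by_contra hne
    have h2 : 2 ≤ P.roots.count w := by
      have := hcount1 w hw; omega
    have : ∑ v ∈ T, P.roots.count v = P.roots.count w + ∑ v ∈ T.erase w, P.roots.count v :=
      (Finset.add_sum_erase T _ hw).symm
    have herase : (T.erase w).card ≤ ∑ v ∈ T.erase w, P.roots.count v := by
      rw [Finset.card_eq_sum_ones]
      exact Finset.sum_le_sum (fun v hv => hcount1 v (Finset.mem_of_mem_erase hv))
    rw [Finset.card_erase_of_mem hw, hTcard] at herase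
    omega
  have hlamT : lam ∈ T := by rw [hT]; simp
  have hmuT : mu ∈ T := by rw [hT]; simp
  -- root multiplicity of lam is 1
  have hmultlam : P.rootMultiplicity lam = 1 := by
    rw [← Polynomial.count_roots]
    exact hcounteq lam hlamT
  -- every root is in T
  have hallroots : ∀ z : ℂ, P.IsRoot z → z ∈ T := by
    intro z hz
    by_contra hznot
    have hzmem : z ∈ P.roots.toFinset := by
      rw [Multiset.mem_toFinset, Polynomial.mem_roots hPne]; exact hz
    have hsub2 : insert z T ⊆ P.roots.toFinset := by
      intro w hw
      rcases Finset.mem_insert.mp hw with rfl | hw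
      · exact hzmem
      · exact hTsub hw
    have : ∑ w ∈ insert z T, P.roots.count w ≤ b := by
      calc ∑ w ∈ insert z T, P.roots.count w ≤ ∑ w ∈ P.roots.toFinset, P.roots.count w :=
          Finset.sum_le_sum_of_subset hsub2
        _ = b := by rw [P.roots.toFinset_sum_count_eq]; exact hcard
    rw [Finset.sum_insert hznot, hsumeq] at this
    have : 1 ≤ P.roots.count z := by
      rw [Nat.one_le_iff_ne_zero, Ne, Multiset.count_eq_zero]
      intro hnot
      exact hnot (Multiset.mem_toFinset.mp hzmem)
    omega
  refine ⟨rPoly_monic a b hb2, ?_, lam, hlamgt, hlamroot, hmultlam, by simp [hlam], mu,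
    hmult1, hmuroot, ?_⟩
  · intro i hi
    rw [rPoly_natDegree a b hb2] at hi ⊢
    exact rPoly_recip a b hb2 i hi
  · intro z hz
    have := hallroots z hz
    rw [hT] at this
    simp only [Finset.mem_insert] at this
    rcases this with rfl | rfl | hmem
    · exact Or.inl rfl
    · exact Or.inr (Or.inl rfl)
    · exact Or.inr (Or.inr (hT1root z hmem).2)
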